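/- The entropy of the tempered distribution is strictly decreasing in α on (0, ∞) whenever p is not uniform: for a strictly positive probability vector p : Fin n → ℝ that is not constant, the function α ↦ H(p^α), where p^α_i = p_i^α / ∑_j p_j^α, has derivative -α · Var_{p^α}(e), with e_i = -log p_i, which is strictly negative for α > 0. -/

import Mathlib

open Finset Real

noncomputable def shannonEntropy {n : ℕ} (p : Fin n → ℝ) : ℝ :=
  -∑ i, p i * Real.log (p i)

/-- The tempered (Gibbs) transform of `p` with inverse temperature `α`. -/
noncomputable def tempered {n : ℕ} (p : Fin n → ℝ) (α : ℝ) : Fin n → ℝ :=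
  fun i => p i ^ α / ∑ j, p j ^ α

/-- Variance of `e` under the distribution `q`. -/
noncomputable def varUnder {n : ℕ} (q e : Fin n → ℝ) : ℝ :=
  (∑ i, q i * e i ^ 2) - (∑ i, q i * e i) ^ 2

/-- The entropy of the tempered distribution has derivative
`-α · Var_{p^α}(-log p)`, which is strictly negative for `α > 0` when `p` is
not uniform. -/
theorem entropy_tempered_hasDerivAt {n : ℕ} (p : Fin n → ℝ) (α : ℝ)
    (hpos : ∀ i, 0 < p i) (hsum : ∑ i, p i = 1)
    (hne : ∃ i j : Fin n, p i ≠ p j) (hα : 0 < α) :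
    HasDerivAt (fun a : ℝ => shannonEntropy (tempered p a))
      (-α * varUnder (tempered p α) (fun i => -Real.log (p i))) α ∧
    -α * varUnder (tempered p α) (fun i => -Real.log (p i)) < 0 := by
  classical
  obtain ⟨i0, j0, hij⟩ := hne
  set L : Fin n → ℝ := fun i => Real.log (p i) with hLdef
  have hF : ∀ a : ℝ, 0 < ∑ j, p j ^ a := fun a =>
    Finset.sum_pos (fun j _ => Real.rpow_pos_of_pos (hpos j) a) ⟨i0, mem_univ i0⟩
  have hFne : ∀ a : ℝ, (∑ j, p j ^ a) ≠ 0 := fun a => ne_of_gt (hF a)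
  -- entropy formula
  have hEnt : ∀ a : ℝ, shannonEntropy (tempered p a) =
      Real.log (∑ j, p j ^ a) - a * ((∑ j, p j ^ a * L j) / (∑ j, p j ^ a)) := by
    intro a
    have hterm : ∀ i : Fin n, (p i ^ a / ∑ j, p j ^ a) *
        Real.log (p i ^ a / ∑ j, p j ^ a) =
        a * ((p i ^ a * L i) / (∑ j, p j ^ a)) -
          Real.log (∑ j, p j ^ a) * (p i ^ a / ∑ j, p j ^ a) := by
      intro i
      rw [Real.log_div (ne_of_gt (Real.rpow_pos_of_pos (hpos i) a)) (hFne a),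
        Real.log_rpow (hpos i)]
      ring
    simp only [shannonEntropy, tempered]
    rw [Finset.sum_congr rfl fun i _ => hterm i, Finset.sum_sub_distrib,
      ← Finset.mul_sum, ← Finset.mul_sum, ← Finset.sum_div, ← Finset.sum_div,
      div_self (hFne a)]
    ring
  set F : ℝ := ∑ j, p j ^ α with hFdef
  set G : ℝ := ∑ j, p j ^ α * L j with hGdef
  set S : ℝ := ∑ j, p j ^ α * L j ^ 2 with hSdef
  have hFd : HasDerivAt (fun a : ℝ => ∑ j, p j ^ a) G α := by
    rw [hGdef]
    exact HasDerivAt.fun_sum fun j _ => (hasStrictDerivAt_const_rpow (hpos j) α).hasDerivAt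
  have hGd : HasDerivAt (fun a : ℝ => ∑ j, p j ^ a * L j) S α := by
    rw [hSdef]
    refine HasDerivAt.fun_sum fun j _ => ?_
    have := ((hasStrictDerivAt_const_rpow (hpos j) α).hasDerivAt).mul_const (L j)
    simpa [sq, mul_assoc] using this
  -- variance formula
  have hVar : varUnder (tempered p α) (fun i => -Real.log (p i)) = S / F - (G / F) ^ 2 := by
    have e1 : ∀ x : Fin n, (p x ^ α / (∑ j, p j ^ α)) * (-Real.log (p x)) ^ 2 =
        (p x ^ α * L x ^ 2) / (∑ j, p j ^ α) := fun x => by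
      simp only [hLdef]; ring
    have e2 : ∀ x : Fin n, (p x ^ α / (∑ j, p j ^ α)) * (-Real.log (p x)) =
        -((p x ^ α * L x) / (∑ j, p j ^ α)) := fun x => by
      simp only [hLdef]; ring
    simp only [varUnder, tempered, hSdef, hGdef, hFdef]
    rw [Finset.sum_congr rfl fun x _ => e1 x, Finset.sum_congr rfl fun x _ => e2 x,
      Finset.sum_neg_distrib, neg_sq, ← Finset.sum_div, ← Finset.sum_div]
  -- the derivative
  have hHd : HasDerivAt (fun a : ℝ => Real.log (∑ j, p j ^ a) -
      a * ((∑ j, p j ^ a * L j) / (∑ j, p j ^ a)))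
      (-α * varUnder (tempered p α) (fun i => -Real.log (p i))) α := by
    have h1 : HasDerivAt (fun a : ℝ => Real.log (∑ j, p j ^ a)) (G / F) α :=
      hFd.log (hFne α)
    have h2 : HasDerivAt (fun a : ℝ => (∑ j, p j ^ a * L j) / (∑ j, p j ^ a))
        ((S * F - G * G) / F ^ 2) α := hGd.div hFd (hFne α)
    have h3 := (hasDerivAt_id α).mul h2
    have h4 := h1.sub h3
    refine h4.congr_deriv ?_
    rw [hVar]
    rw [← hGdef, ← hFdef, id_eq]
    have hF0 : F ≠ 0 := hFne α
    field_simp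
    ring
  have hfun : (fun a : ℝ => shannonEntropy (tempered p a)) =
      fun a : ℝ => Real.log (∑ j, p j ^ a) -
        a * ((∑ j, p j ^ a * L j) / (∑ j, p j ^ a)) := funext hEnt
  -- positivity of variance
  set q : Fin n → ℝ := tempered p α with hqdef
  set e : Fin n → ℝ := fun i => -Real.log (p i) with hedef
  have hqpos : ∀ i, 0 < q i := fun i =>
    div_pos (Real.rpow_pos_of_pos (hpos i) α) (hF α)
  have hq1 : ∑ i, q i = 1 := by
    simp only [hqdef, tempered, ← Finset.sum_div]
    exact div_self (hFne α)
  set μ : ℝ := ∑ i, q i * e i with hμdef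
  have hvar2 : varUnder q e = ∑ i, q i * (e i - μ) ^ 2 := by
    have : ∀ i : Fin n, q i * (e i - μ) ^ 2 =
        q i * e i ^ 2 - 2 * μ * (q i * e i) + μ ^ 2 * q i := fun i => by ring
    rw [Finset.sum_congr rfl fun i _ => this i, Finset.sum_add_distrib,
      Finset.sum_sub_distrib, ← Finset.mul_sum, ← Finset.mul_sum, hq1, ← hμdef]
    simp only [varUnder]
    ring
  have heij : e i0 ≠ e j0 := by
    simp only [hedef, ne_eq, neg_inj]
    intro h
    exact hij (by rw [← Real.exp_log (hpos i0), ← Real.exp_log (hpos j0), h])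
  have hvpos : 0 < varUnder q e := by
    rw [hvar2]
    have hex : ∃ k : Fin n, e k ≠ μ := by
      by_contra h
      push_neg at h
      exact heij (by rw [h i0, h j0])
    obtain ⟨k, hk⟩ := hex
    refine Finset.sum_pos' (fun i _ => mul_nonneg (le_of_lt (hqpos i)) (sq_nonneg _))
      ⟨k, mem_univ k, ?_⟩
    have hk' : e k - μ ≠ 0 := sub_ne_zero.mpr hk
    exact mul_pos (hqpos k) (by positivity)
  constructor
  · rw [hfun]; exact hHd
  · have : 0 < α * varUnder q e := mul_pos hα hvpos
    simpa [hqdef, hedef, neg_mul] using neg_neg_of_pos this
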